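/- Let r be a positive integer, n <= q-1 with n = mr + s, 1 <= s <= r, and let d be a positive integer with d <= s. Then there exists a q-ary linear locally repairable code with length N = n + ceil(n/r), dimension K = n - d + 1, minimum distance exactly d + 1, and locality r, which meets the Singleton-type bound d(C) = N - K - ceil(K/r) + 2 with equality. -/
import Mathlib


open Finset

/-- `R` (containing `i`) is a recovery set at coordinate `i` for the code `C`. -/
def IsRecoverySet {F : Type*} [Field F] {ι : Type*} [Fintype ι]
    (C : Submodule F (ι → F)) (i : ι) (R : Finset ι) : Prop :=
  i ∈ R ∧ ∀ u ∈ C, ∀ v ∈ C, (∀ j ∈ R, j ≠ i → u j = v j) → u i = v i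

/-- `C` has locality `r`: every coordinate has a recovery set of size at most `r+1`. -/
def HasLocality {F : Type*} [Field F] {ι : Type*} [Fintype ι]
    (C : Submodule F (ι → F)) (r : ℕ) : Prop :=
  ∀ i : ι, ∃ R : Finset ι, R.card ≤ r + 1 ∧ IsRecoverySet C i R

/-- Every nonzero codeword of `C` has Hamming weight at least `d`. -/
def DistAtLeast {F : Type*} [Field F] [DecidableEq F] {ι : Type*} [Fintype ι]
    (C : Submodule F (ι → F)) (d : ℕ) : Prop :=
  ∀ c ∈ C, c ≠ 0 → d ≤ hammingNorm c

/-- `C` has minimum distance exactly `d`. -/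
def IsMinDist {F : Type*} [Field F] [DecidableEq F] {ι : Type*} [Fintype ι]
    (C : Submodule F (ι → F)) (d : ℕ) : Prop :=
  (∃ c ∈ C, c ≠ 0 ∧ hammingNorm c = d) ∧ DistAtLeast C d

/-- for `r ≥ 1`, `n ≤ q-1` with `n = mr + s`, `1 ≤ s ≤ r`, and `1 ≤ d ≤ s`,
there exists a `q`-ary linear locally repairable code of length `N = n + ⌈n/r⌉`, dimension
`K = n - d + 1`, minimum distance exactly `d + 1` and locality `r`, meeting the
Singleton-type bound `d(C) = N - K - ⌈K/r⌉ + 2` with equality. -/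
lemma vand_ker {F : Type*} [Field F] {ι : Type*} [DecidableEq ι] (t : Finset ι) (α : ι → F)
    (hinj : Set.InjOn α t) (c : ι → F) (e : ℕ) (hcard : t.card ≤ e)
    (h : ∀ k < e, ∑ j ∈ t, c j * α j ^ k = 0) : ∀ j ∈ t, c j = 0 := by
  intro j0 hj0
  set P : Polynomial F := ∏ j ∈ t.erase j0, (Polynomial.X - Polynomial.C (α j)) with hP
  have hdeg : P.natDegree < e := by
    have h1 : P.natDegree = (t.erase j0).card := by
      rw [hP, Polynomial.natDegree_prod_of_monic _ _ fun j _ => Polynomial.monic_X_sub_C _]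
      simp
    have h2 : 1 ≤ t.card := Finset.card_pos.2 ⟨j0, hj0⟩
    rw [h1, Finset.card_erase_of_mem hj0]
    omega
  have hev : ∀ x : F, P.eval x = ∑ k ∈ Finset.range e, P.coeff k * x ^ k := fun x =>
    Polynomial.eval_eq_sum_range' hdeg x
  have hsum : ∑ j ∈ t, c j * P.eval (α j) = 0 := by
    calc ∑ j ∈ t, c j * P.eval (α j)
        = ∑ j ∈ t, ∑ k ∈ Finset.range e, P.coeff k * (c j * α j ^ k) := by
          refine Finset.sum_congr rfl fun j _ => ?_
          rw [hev, Finset.mul_sum]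
          exact Finset.sum_congr rfl fun k _ => by ring
      _ = ∑ k ∈ Finset.range e, P.coeff k * ∑ j ∈ t, c j * α j ^ k := by
          rw [Finset.sum_comm]
          exact Finset.sum_congr rfl fun k _ => by rw [Finset.mul_sum]
      _ = 0 := Finset.sum_eq_zero fun k hk => by
          rw [h k (Finset.mem_range.1 hk), mul_zero]
  have hsingle : ∑ j ∈ t, c j * P.eval (α j) = c j0 * P.eval (α j0) := by
    refine Finset.sum_eq_single_of_mem j0 hj0 fun j hj hne => ?_
    have hz : P.eval (α j) = 0 := by
      rw [hP, Polynomial.eval_prod]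
      exact Finset.prod_eq_zero (Finset.mem_erase.2 ⟨hne, hj⟩) (by simp)
    rw [hz, mul_zero]
  have hne : P.eval (α j0) ≠ 0 := by
    rw [hP, Polynomial.eval_prod]
    refine Finset.prod_ne_zero_iff.2 fun j hj => ?_
    obtain ⟨hjne, hjt⟩ := Finset.mem_erase.1 hj
    have : α j0 ≠ α j := fun hh => hjne (hinj hjt hj0 hh.symm)
    simpa using sub_ne_zero.2 this
  have := hsingle ▸ hsum
  rcases mul_eq_zero.1 this with h' | h'
  · exact h'
  · exact absurd h' hne

set_option maxHeartbeats 2000000 in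
theorem singleton_optimal_lengthened_RS {q n m s r d : ℕ}
    {F : Type*} [Field F] [Fintype F] [DecidableEq F] (hcard : Fintype.card F = q)
    (hr : 1 ≤ r) (hnq : n ≤ q - 1) (hn : n = m * r + s) (hs1 : 1 ≤ s) (hsr : s ≤ r)
    (hd1 : 1 ≤ d) (hds : d ≤ s) :
    ∃ C : Submodule F (Fin (n + (n + r - 1) / r) → F),
      Module.finrank F C = n + 1 - d ∧
      IsMinDist C (d + 1) ∧
      HasLocality C r ∧
      d + 1 = (n + (n + r - 1) / r) - (n + 1 - d) - ((n + 1 - d) + r - 1) / r + 2 := by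
  classical
  have hdn : d ≤ n := by omega
  have hceil1 : (n + r - 1) / r = m + 1 := by
    have hmr : (m + 1) * r = m * r + r := by ring
    have h1 : n + r - 1 = (s - 1) + (m + 1) * r := by omega
    rw [h1, Nat.add_mul_div_right _ _ (by omega : 0 < r), Nat.div_eq_of_lt (by omega)]
    omega
  have hceil2 : ((n + 1 - d) + r - 1) / r = m + 1 := by
    have hmr : (m + 1) * r = m * r + r := by ring
    have h1 : (n + 1 - d) + r - 1 = (s - d) + (m + 1) * r := by omega
    rw [h1, Nat.add_mul_div_right _ _ (by omega : 0 < r), Nat.div_eq_of_lt (by omega)]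
    omega
  rw [hceil1, hceil2]
  -- nonzero distinct elements
  obtain ⟨α, hαinj, hα0⟩ : ∃ α : Fin n → F, Function.Injective α ∧ ∀ j, α j ≠ 0 := by
    have hle : Fintype.card (Fin n) ≤ Fintype.card Fˣ := by
      rw [Fintype.card_units, hcard, Fintype.card_fin]; exact hnq
    obtain ⟨f⟩ := Function.Embedding.nonempty_of_card_le hle
    exact ⟨fun j => (f j : F), fun a b hab => f.injective (Units.ext hab),
      fun j => (f j).ne_zero⟩
  set Nn := n + (m + 1) with hNn
  have hnN : n ≤ Nn := by omega
  let dataIdx : Fin n → Fin Nn := Fin.castLE hnN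
  let parIdx : Fin (m + 1) → Fin Nn := fun i => ⟨n + i.1, by omega⟩
  have hdataval : ∀ j : Fin n, (dataIdx j).1 = j.1 := fun j => rfl
  have hparval : ∀ i : Fin (m + 1), (parIdx i).1 = n + i.1 := fun i => rfl
  -- the Vandermonde parity checks on the data part
  let Ψ : (Fin n → F) →ₗ[F] (Fin (d - 1) → F) :=
    LinearMap.pi fun k => ∑ j : Fin n, (α j ^ (k.1 + 1)) • LinearMap.proj j
  have hΨ : ∀ (y : Fin n → F) (k : Fin (d - 1)),
      Ψ y k = ∑ j : Fin n, y j * α j ^ (k.1 + 1) := by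
    intro y k
    simp [Ψ, LinearMap.pi_apply, LinearMap.sum_apply, mul_comm]
  -- the local (group) parity checks
  let rowG : Fin (m + 1) → ((Fin Nn → F) →ₗ[F] F) := fun i =>
    (∑ j ∈ univ.filter (fun j : Fin n => j.1 / r = i.1), LinearMap.proj (dataIdx j)) +
      LinearMap.proj (parIdx i)
  have hrowG : ∀ (i : Fin (m + 1)) (x : Fin Nn → F),
      rowG i x = (∑ j ∈ univ.filter (fun j : Fin n => j.1 / r = i.1), x (dataIdx j)) +
        x (parIdx i) := by
    intro i x
    simp [rowG, LinearMap.sum_apply]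
  let Rmap : (Fin Nn → F) →ₗ[F] (Fin n → F) := LinearMap.funLeft F F dataIdx
  have hRmap : ∀ (x : Fin Nn → F) (j : Fin n), Rmap x j = x (dataIdx j) := fun x j => rfl
  let Φ : (Fin Nn → F) →ₗ[F] (Fin (d - 1) → F) × (Fin (m + 1) → F) :=
    (Ψ.comp Rmap).prod (LinearMap.pi rowG)
  set C : Submodule F (Fin Nn → F) := LinearMap.ker Φ with hC
  have hmem : ∀ x : Fin Nn → F, x ∈ C ↔
      (∀ k : Fin (d - 1), ∑ j : Fin n, x (dataIdx j) * α j ^ (k.1 + 1) = 0) ∧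
      (∀ i : Fin (m + 1),
        (∑ j ∈ univ.filter (fun j : Fin n => j.1 / r = i.1), x (dataIdx j)) + x (parIdx i)
          = 0) := by
    intro x
    rw [hC, LinearMap.mem_ker]
    constructor
    · intro h
      have h1 := congrArg Prod.fst h
      have h2 := congrArg Prod.snd h
      constructor
      · intro k
        have := congrFun h1 k
        simpa [Φ, hΨ, hRmap] using this
      · intro i
        have := congrFun h2 i
        simpa [Φ, LinearMap.pi_apply, hrowG] using this
    · intro ⟨h1, h2⟩
      refine Prod.ext ?_ ?_
      · funext k
        simpa [Φ, hΨ, hRmap] using h1 k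
      · funext i
        simpa [Φ, LinearMap.pi_apply, hrowG] using h2 i
  -- distance-type lemmas on the data part
  have hsum_restrict : ∀ (y : Fin n → F) (f : Fin n → F),
      ∑ j ∈ univ.filter (fun j => y j ≠ 0), y j * f j = ∑ j : Fin n, y j * f j := by
    intro y f
    refine Finset.sum_subset (Finset.filter_subset _ _) fun j _ hj => ?_
    simp only [Finset.mem_filter, Finset.mem_univ, true_and, not_not] at hj
    rw [hj, zero_mul]
  have hC0dist : ∀ y : Fin n → F, Ψ y = 0 →
      (univ.filter (fun j => y j ≠ 0)).card ≤ d - 1 → y = 0 := by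
    intro y hy hcardT
    have hz := vand_ker (univ.filter (fun j => y j ≠ 0)) α
      hαinj.injOn (fun j => y j * α j) (d - 1) hcardT ?_
    · funext j
      by_cases hj : y j = 0
      · exact hj
      · have := hz j (by simp [hj])
        rcases mul_eq_zero.1 this with h' | h'
        · exact h'
        · exact absurd h' (hα0 j)
    · intro k hk
      have h1 : ∑ j ∈ univ.filter (fun j => y j ≠ 0), (y j * α j) * α j ^ k
          = ∑ j : Fin n, y j * α j ^ (k + 1) := by
        rw [← hsum_restrict y (fun j => α j ^ (k + 1))]
        exact Finset.sum_congr rfl fun j _ => by ring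
      rw [h1]
      have := congrFun hy (⟨k, hk⟩ : Fin (d - 1))
      rw [hΨ] at this
      simpa using this
  have hC0dist' : ∀ y : Fin n → F, Ψ y = 0 → (∑ j : Fin n, y j) = 0 →
      (univ.filter (fun j => y j ≠ 0)).card ≤ d → y = 0 := by
    intro y hy hsum hcardT
    have hz := vand_ker (univ.filter (fun j => y j ≠ 0)) α
      hαinj.injOn y d hcardT ?_
    · funext j
      by_cases hj : y j = 0
      · exact hj
      · exact hz j (by simp [hj])
    · intro k hk
      match k, hk with
      | 0, _ =>
        have h1 := hsum_restrict y 1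
        simp only [Pi.one_apply, mul_one] at h1
        simp only [pow_zero, mul_one]
        exact h1.trans hsum
      | (k + 1), hk =>
        have h1 : ∑ j ∈ univ.filter (fun j => y j ≠ 0), y j * α j ^ (k + 1)
            = ∑ j : Fin n, y j * α j ^ (k + 1) := hsum_restrict y (fun j => α j ^ (k + 1))
        rw [h1]
        have := congrFun hy (⟨k, by omega⟩ : Fin (d - 1))
        rw [hΨ] at this
        simpa using this
  -- if the data part of a codeword vanishes, the codeword vanishes
  have hxzero : ∀ x ∈ C, (∀ j : Fin n, x (dataIdx j) = 0) → x = 0 := by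
    intro x hx hdata
    have hpar : ∀ i : Fin (m + 1), x (parIdx i) = 0 := by
      intro i
      have := ((hmem x).1 hx).2 i
      have hz : ∑ j ∈ univ.filter (fun j : Fin n => j.1 / r = i.1), x (dataIdx j) = 0 :=
        Finset.sum_eq_zero fun j _ => hdata j
      rw [hz, zero_add] at this
      exact this
    funext i
    by_cases hi : i.1 < n
    · have : i = dataIdx ⟨i.1, hi⟩ := by
        apply Fin.ext; rfl
      rw [this]; exact hdata _
    · have hi2 : i.1 - n < m + 1 := by have := i.2; simp only [hNn] at this; omega
      have : i = parIdx ⟨i.1 - n, hi2⟩ := by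
        apply Fin.ext; simp [hparval]; omega
      rw [this]; exact hpar _
  -- weight counting
  have hwt : ∀ x : Fin Nn → F, hammingNorm x = (univ.filter (fun i => x i ≠ 0)).card :=
    fun x => rfl
  have hdinj : Function.Injective dataIdx := Fin.castLE_injective _
  have hpinj : Function.Injective parIdx := by
    intro a b hab
    have h1 : n + a.1 = n + b.1 := congrArg Fin.val hab
    exact Fin.ext (by omega)
  have hcardTP : ∀ x : Fin Nn → F,
      (univ.filter (fun j : Fin n => x (dataIdx j) ≠ 0)).card +
      (univ.filter (fun i : Fin (m+1) => x (parIdx i) ≠ 0)).card ≤ hammingNorm x := by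
    intro x
    rw [hwt]
    set T := univ.filter (fun j : Fin n => x (dataIdx j) ≠ 0) with hT
    set P := univ.filter (fun i : Fin (m+1) => x (parIdx i) ≠ 0) with hP
    have hdisj : Disjoint (T.image dataIdx) (P.image parIdx) := by
      rw [Finset.disjoint_left]
      intro a ha hb
      obtain ⟨j, _, rfl⟩ := Finset.mem_image.1 ha
      obtain ⟨i, _, hji⟩ := Finset.mem_image.1 hb
      have h1 : (dataIdx j).1 < n := j.2
      have h2 : (parIdx i).1 = n + i.1 := rfl
      rw [hji] at h2
      omega
    have hsub : T.image dataIdx ∪ P.image parIdx ⊆ univ.filter (fun i => x i ≠ 0) := by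
      intro a ha
      rcases Finset.mem_union.1 ha with h | h
      · obtain ⟨j, hj, rfl⟩ := Finset.mem_image.1 h
        simp only [hT, Finset.mem_filter, Finset.mem_univ, true_and] at hj ⊢
        exact hj
      · obtain ⟨i, hi, rfl⟩ := Finset.mem_image.1 h
        simp only [hP, Finset.mem_filter, Finset.mem_univ, true_and] at hi ⊢
        exact hi
    calc T.card + P.card
        = (T.image dataIdx).card + (P.image parIdx).card := by
          rw [Finset.card_image_of_injective _ hdinj, Finset.card_image_of_injective _ hpinj]
      _ = (T.image dataIdx ∪ P.image parIdx).card :=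
          (Finset.card_union_of_disjoint hdisj).symm
      _ ≤ _ := Finset.card_le_card hsub
  -- group assignment
  have hgbound : ∀ j : Fin n, j.1 / r < m + 1 := by
    intro j
    have h2 : r * (m + 1) = m * r + r := by ring
    have h1 : j.1 < r * (m + 1) := by have := j.2; omega
    exact Nat.div_lt_of_lt_mul h1
  -- minimum distance lower bound
  have hdist : ∀ x ∈ C, x ≠ 0 → d + 1 ≤ hammingNorm x := by
    intro x hx hx0
    by_contra hlt
    push_neg at hlt
    have hwtle : hammingNorm x ≤ d := by omega
    have hTP := hcardTP x
    have hΨx : Ψ (Rmap x) = 0 := by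
      funext k
      rw [hΨ]
      exact ((hmem x).1 hx).1 k
    have hdata0 : ∀ j : Fin n, x (dataIdx j) = 0 := by
      by_cases hPe : ∀ i : Fin (m+1), x (parIdx i) = 0
      · -- parity part vanishes; total data sum is 0
        have hPc : (univ.filter (fun i : Fin (m+1) => x (parIdx i) ≠ 0)).card = 0 := by
          rw [Finset.card_eq_zero, Finset.filter_eq_empty_iff]
          intro i _
          simpa using hPe i
        have htot : ∑ j : Fin n, x (dataIdx j) = 0 := by
          let g : Fin n → Fin (m + 1) := fun j => ⟨j.1 / r, hgbound j⟩
          have hfib := Finset.sum_fiberwise_of_maps_to (s := (univ : Finset (Fin n)))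
            (fun (j : Fin n) _ => Finset.mem_univ (g j)) (fun j => x (dataIdx j))
          rw [← hfib]
          refine Finset.sum_eq_zero fun i _ => ?_
          have hgrp := ((hmem x).1 hx).2 i
          rw [hPe i, add_zero] at hgrp
          rw [← hgrp]
          refine Finset.sum_congr (Finset.filter_congr fun j _ => ?_) fun _ _ => rfl
          simp [g, Fin.ext_iff]
        have hcT : (univ.filter (fun j : Fin n => x (dataIdx j) ≠ 0)).card ≤ d := by omega
        have := hC0dist' (fun j => x (dataIdx j)) hΨx htot hcT
        exact fun j => congrFun this j
      · push_neg at hPe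
        obtain ⟨i0, hi0⟩ := hPe
        have hPc : 1 ≤ (univ.filter (fun i : Fin (m+1) => x (parIdx i) ≠ 0)).card :=
          Finset.card_pos.2 ⟨i0, by simp [hi0]⟩
        have hcT : (univ.filter (fun j : Fin n => x (dataIdx j) ≠ 0)).card ≤ d - 1 := by
          omega
        have := hC0dist (fun j => x (dataIdx j)) hΨx hcT
        exact fun j => congrFun this j
    exact hx0 (hxzero x hx hdata0)
  -- dimension of the data-part code  C0 = ker Ψ
  have hfinC0 : Module.finrank F (LinearMap.ker Ψ) + (d - 1) = n := by
    have hlow : n ≤ Module.finrank F (LinearMap.ker Ψ) + (d - 1) := by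
      have hrn := LinearMap.finrank_range_add_finrank_ker Ψ
      have h1 : Module.finrank F (Fin n → F) = n := by simp
      have h2 : Module.finrank F (LinearMap.range Ψ) ≤ d - 1 := by
        have h3 := Submodule.finrank_le (LinearMap.range Ψ)
        simpa using h3
      omega
    have hhigh : Module.finrank F (LinearMap.ker Ψ) + (d - 1) ≤ n := by
      let E : (Fin (d - 1) → F) →ₗ[F] (Fin n → F) :=
        LinearMap.pi fun j : Fin n =>
          if h : j.1 < d - 1 then LinearMap.proj (⟨j.1, h⟩ : Fin (d - 1)) else 0
      have hEeval : ∀ (c : Fin (d - 1) → F) (j : Fin n),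
          E c j = if h : j.1 < d - 1 then c ⟨j.1, h⟩ else 0 := by
        intro c j
        by_cases h : j.1 < d - 1 <;> simp [E, LinearMap.pi_apply, h]
      have hEinj : Function.Injective E := by
        intro a b hab
        funext k
        have hkn : k.1 < n := by omega
        have hk : (Fin.mk k.1 hkn).1 < d - 1 := k.2
        have h0 := congrFun hab (Fin.mk k.1 hkn)
        rw [hEeval, hEeval, dif_pos hk, dif_pos hk] at h0
        have h2 : (⟨(Fin.mk k.1 hkn).1, hk⟩ : Fin (d - 1)) = k := Fin.ext rfl
        rwa [h2] at h0
      have hrE : Module.finrank F (LinearMap.range E) = d - 1 := by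
        rw [LinearMap.finrank_range_of_inj hEinj]; simp
      have hint : LinearMap.ker Ψ ⊓ LinearMap.range E = ⊥ := by
        rw [Submodule.eq_bot_iff]
        intro y hy
        rw [Submodule.mem_inf] at hy
        obtain ⟨hy1, hy2⟩ := hy
        obtain ⟨c, rfl⟩ := hy2
        have hsub : univ.filter (fun j => E c j ≠ 0) ⊆
            univ.filter (fun j : Fin n => j.1 < d - 1) := by
          intro j hj
          simp only [Finset.mem_filter, Finset.mem_univ, true_and] at hj ⊢
          by_contra h
          exact hj (by rw [hEeval, dif_neg h])
        have hcard2 : (univ.filter (fun j : Fin n => j.1 < d - 1)).card ≤ d - 1 := by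
          have hmem2 : ∀ j ∈ univ.filter (fun j : Fin n => j.1 < d - 1),
              j.1 ∈ Finset.range (d - 1) := by
            intro j hj
            simp only [Finset.mem_filter, Finset.mem_univ, true_and] at hj
            exact Finset.mem_range.2 hj
          calc (univ.filter (fun j : Fin n => j.1 < d - 1)).card
              ≤ (Finset.range (d - 1)).card := Finset.card_le_card_of_injOn (fun j => j.1)
                hmem2 (fun a _ b _ hab => Fin.ext hab)
            _ = d - 1 := Finset.card_range _
        exact hC0dist (E c) (LinearMap.mem_ker.1 hy1)
          (le_trans (Finset.card_le_card hsub) hcard2)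
      have hse := Submodule.finrank_sup_add_finrank_inf_eq (LinearMap.ker Ψ)
        (LinearMap.range E)
      rw [hint, finrank_bot, hrE, add_zero] at hse
      have h3 := Submodule.finrank_le (LinearMap.ker Ψ ⊔ LinearMap.range E)
      have h4 : Module.finrank F (Fin n → F) = n := by simp
      omega
    omega
  -- C is isomorphic to C0 by restriction to the data part
  have hmapsto : ∀ x ∈ C, Rmap x ∈ LinearMap.ker Ψ := by
    intro x hx
    rw [LinearMap.mem_ker]
    funext k
    rw [hΨ]
    exact ((hmem x).1 hx).1 k
  have hfinC : Module.finrank F C = n + 1 - d := by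
    let ρ : C →ₗ[F] LinearMap.ker Ψ := Rmap.restrict hmapsto
    have hρval : ∀ v : C, (ρ v : Fin n → F) = Rmap v.1 := fun v => rfl
    have hρinj : Function.Injective ρ := by
      rw [← LinearMap.ker_eq_bot, Submodule.eq_bot_iff]
      rintro ⟨x, hx⟩ hker
      have h1 : Rmap x = 0 := by
        have := congrArg Subtype.val hker
        simpa [hρval] using this
      have h2 : ∀ j : Fin n, x (dataIdx j) = 0 := fun j => congrFun h1 j
      exact Subtype.ext (hxzero x hx h2)
    have hρsurj : Function.Surjective ρ := by
      rintro ⟨y, hy⟩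
      set x : Fin Nn → F := fun i => if h : i.1 < n then y ⟨i.1, h⟩ else
        -(∑ j ∈ univ.filter (fun j : Fin n => j.1 / r = i.1 - n), y j) with hxdef
      have hdx : ∀ j : Fin n, x (dataIdx j) = y j := by
        intro j
        rw [hxdef]
        simp only [hdataval]
        rw [dif_pos j.2]
      have hpx : ∀ i : Fin (m + 1),
          x (parIdx i) = -(∑ j ∈ univ.filter (fun j : Fin n => j.1 / r = i.1), y j) := by
        intro i
        rw [hxdef]
        simp only [hparval]
        rw [dif_neg (by omega)]
        congr 1
        refine Finset.sum_congr (Finset.filter_congr fun j _ => ?_) fun _ _ => rfl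
        simp [Nat.add_sub_cancel_left]
      have hxC : x ∈ C := by
        rw [hmem]
        constructor
        · intro k
          have h1 : ∑ j : Fin n, x (dataIdx j) * α j ^ (k.1 + 1)
              = ∑ j : Fin n, y j * α j ^ (k.1 + 1) :=
            Finset.sum_congr rfl fun j _ => by rw [hdx]
          rw [h1, ← hΨ, LinearMap.mem_ker.1 hy]
          rfl
        · intro i
          rw [hpx]
          have h1 : ∑ j ∈ univ.filter (fun j : Fin n => j.1 / r = i.1), x (dataIdx j)
              = ∑ j ∈ univ.filter (fun j : Fin n => j.1 / r = i.1), y j :=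
            Finset.sum_congr rfl fun j _ => hdx j
          rw [h1, add_neg_cancel]
      refine ⟨⟨x, hxC⟩, ?_⟩
      apply Subtype.ext
      rw [hρval]
      funext j
      exact hdx j
    have := LinearEquiv.finrank_eq (LinearEquiv.ofBijective ρ ⟨hρinj, hρsurj⟩)
    omega
  -- a codeword of weight exactly d + 1
  have hzero : (0 : Fin (m + 1)) = ⟨0, by omega⟩ := rfl
  have hexist : ∃ z ∈ C, z ≠ 0 ∧ hammingNorm z = d + 1 := by
    let E2 : (Fin (d + 1) → F) →ₗ[F] (Fin Nn → F) :=
      LinearMap.pi fun i : Fin Nn =>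
        if h : i.1 < d then LinearMap.proj (⟨i.1, by omega⟩ : Fin (d + 1))
        else if i.1 = n then LinearMap.proj (⟨d, by omega⟩ : Fin (d + 1)) else 0
    have hE2 : ∀ (c : Fin (d + 1) → F) (i : Fin Nn),
        E2 c i = if h : i.1 < d then c ⟨i.1, by omega⟩
          else if i.1 = n then c ⟨d, by omega⟩ else 0 := by
      intro c i
      by_cases h1 : i.1 < d
      · simp [E2, LinearMap.pi_apply, h1]
      · by_cases h2 : i.1 = n
        · rw [h2] at h1
          simp [E2, LinearMap.pi_apply, h1, h2]
        · simp [E2, LinearMap.pi_apply, h1, h2]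
    let Φ' : (Fin (d + 1) → F) →ₗ[F] (Fin (d - 1) → F) × F :=
      ((Ψ.comp Rmap).comp E2).prod ((rowG 0).comp E2)
    have hninj : ¬ Function.Injective Φ' := by
      intro hinj
      have h1 := LinearMap.finrank_le_finrank_of_injective hinj
      have h2 : Module.finrank F (Fin (d + 1) → F) = d + 1 := by simp
      have h3 : Module.finrank F ((Fin (d - 1) → F) × F) = (d - 1) + 1 := by simp
      omega
    have hker : LinearMap.ker Φ' ≠ ⊥ := fun h => hninj (LinearMap.ker_eq_bot.1 h)
    obtain ⟨c, hc, hc0⟩ := (Submodule.ne_bot_iff _).1 hker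
    rw [LinearMap.mem_ker] at hc
    refine ⟨E2 c, ?_, ?_, ?_⟩
    · rw [hmem]
      constructor
      · intro k
        have h1 := congrFun (congrArg Prod.fst hc) k
        simpa [Φ', hΨ, hRmap] using h1
      · intro i
        by_cases hi : i = 0
        · have h1 := congrArg Prod.snd hc
          rw [hi]
          simpa [Φ', hrowG] using h1
        · have hdata : ∀ j ∈ univ.filter (fun j : Fin n => j.1 / r = i.1),
              E2 c (dataIdx j) = 0 := by
            intro j hj
            simp only [Finset.mem_filter, Finset.mem_univ, true_and] at hj
            have hi1 : 1 ≤ i.1 := by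
              rcases Nat.eq_zero_or_pos i.1 with h | h
              · exact absurd (Fin.ext h : i = ⟨0, by omega⟩) (by rwa [← hzero])
              · exact h
            have hjr : r ≤ j.1 := by
              by_contra hlt2
              push_neg at hlt2
              rw [Nat.div_eq_of_lt hlt2] at hj
              omega
            rw [hE2]
            rw [dif_neg (by have := hdataval j; omega)]
            rw [if_neg (by have := hdataval j; have := j.2; omega)]
          have hpar : E2 c (parIdx i) = 0 := by
            have hi1 : 1 ≤ i.1 := by
              rcases Nat.eq_zero_or_pos i.1 with h | h
              · exact absurd (Fin.ext h : i = ⟨0, by omega⟩) (by rwa [← hzero])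
              · exact h
            rw [hE2]
            rw [dif_neg (by have := hparval i; omega)]
            rw [if_neg (by have := hparval i; omega)]
          rw [Finset.sum_eq_zero hdata, hpar, add_zero]
    · intro hz0
      apply hc0
      funext k
      by_cases hkd : k.1 < d
      · have hkn : k.1 < Nn := by have := k.2; omega
        have h1 := congrFun hz0 (⟨k.1, hkn⟩ : Fin Nn)
        rw [hE2, dif_pos (show (⟨k.1, hkn⟩ : Fin Nn).1 < d from hkd)] at h1
        have h2 : (⟨(⟨k.1, hkn⟩ : Fin Nn).1, Nat.lt_succ_of_lt hkd⟩ : Fin (d + 1)) = k :=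
          Fin.ext rfl
        rwa [h2] at h1
      · have hkd2 : k.1 = d := by have := k.2; omega
        have hnn : n < Nn := by omega
        have h1 := congrFun hz0 (⟨n, hnn⟩ : Fin Nn)
        rw [hE2, dif_neg (show ¬ (⟨n, hnn⟩ : Fin Nn).1 < d by simp; omega),
          if_pos (show (⟨n, hnn⟩ : Fin Nn).1 = n from rfl)] at h1
        have h2 : (⟨d, by omega⟩ : Fin (d + 1)) = k := Fin.ext hkd2.symm
        rwa [h2] at h1
    · have hC2 : E2 c ∈ C := by
        rw [hmem]
        constructor
        · intro k
          have h1 := congrFun (congrArg Prod.fst hc) k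
          simpa [Φ', hΨ, hRmap] using h1
        · intro i
          by_cases hi : i = 0
          · have h1 := congrArg Prod.snd hc
            rw [hi]
            simpa [Φ', hrowG] using h1
          · have hdata : ∀ j ∈ univ.filter (fun j : Fin n => j.1 / r = i.1),
                E2 c (dataIdx j) = 0 := by
              intro j hj
              simp only [Finset.mem_filter, Finset.mem_univ, true_and] at hj
              have hi1 : 1 ≤ i.1 := by
                rcases Nat.eq_zero_or_pos i.1 with h | h
                · exact absurd (Fin.ext h : i = ⟨0, by omega⟩) (by rwa [← hzero])
                · exact h
              have hjr : r ≤ j.1 := by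
                by_contra hlt2
                push_neg at hlt2
                rw [Nat.div_eq_of_lt hlt2] at hj
                omega
              rw [hE2]
              rw [dif_neg (by have := hdataval j; omega)]
              rw [if_neg (by have := hdataval j; have := j.2; omega)]
            have hpar : E2 c (parIdx i) = 0 := by
              have hi1 : 1 ≤ i.1 := by
                rcases Nat.eq_zero_or_pos i.1 with h | h
                · exact absurd (Fin.ext h : i = ⟨0, by omega⟩) (by rwa [← hzero])
                · exact h
              rw [hE2]
              rw [dif_neg (by have := hparval i; omega)]
              rw [if_neg (by have := hparval i; omega)]
            rw [Finset.sum_eq_zero hdata, hpar, add_zero]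
      have hne2 : E2 c ≠ 0 := by
        intro hz0
        apply hc0
        funext k
        by_cases hkd : k.1 < d
        · have hkn : k.1 < Nn := by have := k.2; omega
          have h1 := congrFun hz0 (⟨k.1, hkn⟩ : Fin Nn)
          rw [hE2, dif_pos (show (⟨k.1, hkn⟩ : Fin Nn).1 < d from hkd)] at h1
          have h2 : (⟨(⟨k.1, hkn⟩ : Fin Nn).1, Nat.lt_succ_of_lt hkd⟩ : Fin (d + 1)) = k :=
            Fin.ext rfl
          rwa [h2] at h1
        · have hkd2 : k.1 = d := by have := k.2; omega
          have hnn : n < Nn := by omega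
          have h1 := congrFun hz0 (⟨n, hnn⟩ : Fin Nn)
          rw [hE2, dif_neg (show ¬ (⟨n, hnn⟩ : Fin Nn).1 < d by simp; omega),
            if_pos (show (⟨n, hnn⟩ : Fin Nn).1 = n from rfl)] at h1
          have h2 : (⟨d, by omega⟩ : Fin (d + 1)) = k := Fin.ext hkd2.symm
          rwa [h2] at h1
      have hub : hammingNorm (E2 c) ≤ d + 1 := by
        rw [hwt]
        have hsub : univ.filter (fun i : Fin Nn => E2 c i ≠ 0) ⊆
            univ.filter (fun i : Fin Nn => i.1 < d ∨ i.1 = n) := by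
          intro i hi
          simp only [Finset.mem_filter, Finset.mem_univ, true_and] at hi ⊢
          by_contra h
          push_neg at h
          exact hi (by rw [hE2, dif_neg (not_lt.2 h.1), if_neg h.2])
        have hcard2 :
            (univ.filter (fun i : Fin Nn => i.1 < d ∨ i.1 = n)).card ≤ d + 1 := by
          have hmem2 : ∀ i ∈ univ.filter (fun i : Fin Nn => i.1 < d ∨ i.1 = n),
              i.1 ∈ insert n (Finset.range d) := by
            intro i hi
            simp only [Finset.mem_filter, Finset.mem_univ, true_and] at hi
            rcases hi with h | h
            · exact Finset.mem_insert_of_mem (Finset.mem_range.2 h)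
            · exact Finset.mem_insert.2 (Or.inl h)
          calc (univ.filter (fun i : Fin Nn => i.1 < d ∨ i.1 = n)).card
              ≤ (insert n (Finset.range d)).card := Finset.card_le_card_of_injOn
                (fun i => i.1) hmem2 (fun a _ b _ hab => Fin.ext hab)
            _ ≤ d + 1 := by
                have := Finset.card_insert_le n (Finset.range d)
                simpa using this
        exact le_trans (Finset.card_le_card hsub) hcard2
      exact le_antisymm hub (hdist _ hC2 hne2)
  -- locality
  have hloc : ∀ i : Fin Nn, ∃ R : Finset (Fin Nn), R.card ≤ r + 1 ∧
      (i ∈ R ∧ ∀ u ∈ C, ∀ v ∈ C, (∀ j ∈ R, j ≠ i → u j = v j) → u i = v i) := by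
    intro i
    have hgi : (if i.1 < n then i.1 / r else i.1 - n) < m + 1 := by
      split
      · next h => exact hgbound ⟨i.1, h⟩
      · have := i.2; omega
    set gi : Fin (m + 1) := ⟨if i.1 < n then i.1 / r else i.1 - n, hgi⟩ with hgidef
    set R : Finset (Fin Nn) :=
      (univ.filter (fun j : Fin n => j.1 / r = gi.1)).image dataIdx ∪ {parIdx gi} with hRdef
    have hiR : i ∈ R := by
      rw [hRdef]
      by_cases h : i.1 < n
      · apply Finset.mem_union_left
        refine Finset.mem_image.2 ⟨⟨i.1, h⟩, ?_, Fin.ext rfl⟩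
        simp only [Finset.mem_filter, Finset.mem_univ, true_and, hgidef]
        simp [h]
      · apply Finset.mem_union_right
        have h2 : i = parIdx gi := by
          apply Fin.ext
          rw [hparval]
          simp only [hgidef, if_neg h]
          have := i.2
          omega
        simp [h2]
    have hdisjRP : Disjoint ((univ.filter (fun j : Fin n => j.1 / r = gi.1)).image dataIdx)
        ({parIdx gi} : Finset (Fin Nn)) := by
      rw [Finset.disjoint_right]
      intro a ha hb
      rw [Finset.mem_singleton] at ha
      obtain ⟨j, _, hj2⟩ := Finset.mem_image.1 hb
      have h1 : a.1 = j.1 := by rw [← hj2]; rfl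
      have h2 : a.1 = n + gi.1 := by rw [ha]
      have := j.2
      omega
    have hsumR : ∀ x ∈ C, ∑ j ∈ R, x j = 0 := by
      intro x hx
      have hgrp := ((hmem x).1 hx).2 gi
      rw [hRdef, Finset.sum_union hdisjRP,
        Finset.sum_image (fun a _ b _ hab => hdinj hab), Finset.sum_singleton]
      exact hgrp
    have hcardR : R.card ≤ r + 1 := by
      rw [hRdef]
      refine le_trans (Finset.card_union_le _ _) ?_
      rw [Finset.card_image_of_injective _ hdinj, Finset.card_singleton]
      have hfil : (univ.filter (fun j : Fin n => j.1 / r = gi.1)).card ≤ r := by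
        have hmem2 : ∀ j ∈ univ.filter (fun j : Fin n => j.1 / r = gi.1),
            j.1 % r ∈ Finset.range r := fun j _ => Finset.mem_range.2 (Nat.mod_lt _ (by omega))
        have hinj2 : ∀ a ∈ univ.filter (fun j : Fin n => j.1 / r = gi.1),
            ∀ b ∈ univ.filter (fun j : Fin n => j.1 / r = gi.1),
            a.1 % r = b.1 % r → a = b := by
          intro a ha hb2 hb hab
          simp only [Finset.mem_filter, Finset.mem_univ, true_and] at ha hb
          apply Fin.ext
          rw [← Nat.div_add_mod a.1 r, ← Nat.div_add_mod hb2.1 r, ha, hb, hab]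
        calc (univ.filter (fun j : Fin n => j.1 / r = gi.1)).card
            ≤ (Finset.range r).card :=
              Finset.card_le_card_of_injOn (fun j => j.1 % r) hmem2 hinj2
          _ = r := Finset.card_range _
      omega
    refine ⟨R, hcardR, hiR, ?_⟩
    intro u hu v hv hagree
    have h1 : ∑ j ∈ R, (u - v) j = 0 := hsumR (u - v) (Submodule.sub_mem C hu hv)
    have h2 : ∑ j ∈ R, (u - v) j = (u - v) i := by
      refine Finset.sum_eq_single_of_mem i hiR fun j hj hne => ?_
      exact sub_eq_zero.2 (hagree j hj hne)
    have h3 : (u - v) i = 0 := by rw [← h2, h1]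
    exact sub_eq_zero.1 h3
  refine ⟨C, hfinC, ⟨hexist, hdist⟩, hloc, ?_⟩
  omega
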